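/- Let Σ symmetric positive definite, Λ ∈ ℝ^{n×m}, Q ∈ ℝ^{n×r} an orthonormal basis for the top r left singular vectors of Λ, P = Q(QᵀΣQ)⁻¹QᵀΣ, and R_f = (I-P)Λ with columns r_k. Then ‖R_fᵀ Σ R_f‖₂ ≤ tr(R_fᵀΣR_f) = Σ_{k=1}^m r_kᵀΣr_k ≤ m ‖Σ‖₂ σ_{r+1}(Λ)². -/

import Mathlib

open Matrix
open scoped Matrix.Norms.L2Operator

noncomputable def op2 {m n : ℕ} (A : Matrix (Fin m) (Fin n) ℝ) : ℝ :=
  ‖LinearMap.toContinuousLinearMap (Matrix.toEuclideanLin A)‖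

noncomputable def enorm2 {n : ℕ} (v : Fin n → ℝ) : ℝ :=
  Real.sqrt (∑ i, v i ^ 2)

/-- The (r+1)-st singular value, via the Eckart–Young characterization:
the distance (in operator 2-norm) to the set of matrices of rank at most r. -/
noncomputable def sval {n m : ℕ} (A : Matrix (Fin n) (Fin m) ℝ) (r : ℕ) : ℝ :=
  sInf {t | ∃ B : Matrix (Fin n) (Fin m) ℝ, B.rank ≤ r ∧ t = op2 (A - B)}

lemma op2_eq_norm {p q : ℕ} (A : Matrix (Fin p) (Fin q) ℝ) : op2 A = ‖A‖ := rfl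

lemma op2_nonneg {p q : ℕ} (A : Matrix (Fin p) (Fin q) ℝ) : 0 ≤ op2 A := norm_nonneg _

lemma dot_as_inner {p : ℕ} (a b : Fin p → ℝ) :
    a ⬝ᵥ b = inner ℝ ((WithLp.equiv 2 _).symm a : EuclideanSpace ℝ (Fin p))
      ((WithLp.equiv 2 _).symm b : EuclideanSpace ℝ (Fin p)) := by
  simp [EuclideanSpace.inner_eq_star_dotProduct, dotProduct, mul_comm]

lemma enorm_mulVec_le {p q : ℕ} (A : Matrix (Fin p) (Fin q) ℝ) (x : Fin q → ℝ) :
    ‖((WithLp.equiv 2 _).symm (A *ᵥ x) : EuclideanSpace ℝ (Fin p))‖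
      ≤ op2 A * ‖((WithLp.equiv 2 _).symm x : EuclideanSpace ℝ (Fin q))‖ :=
  A.l2_opNorm_mulVec ((WithLp.equiv 2 _).symm x)

lemma quad_le {p : ℕ} (S : Matrix (Fin p) (Fin p) ℝ) (y : Fin p → ℝ) :
    y ⬝ᵥ (S *ᵥ y) ≤ op2 S * (y ⬝ᵥ y) := by
  set Y : EuclideanSpace ℝ (Fin p) := (WithLp.equiv 2 _).symm y with hY
  rw [dot_as_inner, dot_as_inner]
  rw [real_inner_self_eq_norm_sq]
  calc inner ℝ Y ((WithLp.equiv 2 _).symm (S *ᵥ y) : EuclideanSpace ℝ (Fin p))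
      ≤ ‖Y‖ * ‖((WithLp.equiv 2 _).symm (S *ᵥ y) : EuclideanSpace ℝ (Fin p))‖ :=
        real_inner_le_norm _ _
    _ ≤ ‖Y‖ * (op2 S * ‖Y‖) := by
        have := enorm_mulVec_le S y
        have h0 : (0:ℝ) ≤ ‖Y‖ := norm_nonneg _
        nlinarith [norm_nonneg ((WithLp.equiv 2 _).symm (S *ᵥ y) : EuclideanSpace ℝ (Fin p))]
    _ = op2 S * ‖Y‖ ^ 2 := by ring

lemma op2_le_frob {p q : ℕ} (B : Matrix (Fin p) (Fin q) ℝ) :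
    op2 B ≤ Real.sqrt (∑ i, ∑ j, B i j ^ 2) := by
  have h0 : (0:ℝ) ≤ Real.sqrt (∑ i, ∑ j, B i j ^ 2) := Real.sqrt_nonneg _
  refine ContinuousLinearMap.opNorm_le_bound _ h0 fun x => ?_
  have hx : ‖x‖ = Real.sqrt (∑ j, x j ^ 2) := by
    rw [EuclideanSpace.norm_eq]
    congr 1
    exact Finset.sum_congr rfl fun j _ => by rw [Real.norm_eq_abs, sq_abs]
  have happ : (LinearMap.toContinuousLinearMap (Matrix.toEuclideanLin B)) x
      = ((WithLp.equiv 2 _).symm (B *ᵥ (WithLp.equiv 2 _ x)) : EuclideanSpace ℝ (Fin p)) := rfl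
  rw [happ]
  have hnorm : ‖((WithLp.equiv 2 _).symm (B *ᵥ (WithLp.equiv 2 _ x)) : EuclideanSpace ℝ (Fin p))‖
      = Real.sqrt (∑ i, (B *ᵥ x) i ^ 2) := by
    rw [EuclideanSpace.norm_eq]
    congr 1
    exact Finset.sum_congr rfl fun i _ => by rw [Real.norm_eq_abs, sq_abs]; rfl
  rw [hnorm, hx, ← Real.sqrt_mul (by positivity)]
  apply Real.sqrt_le_sqrt
  rw [Finset.sum_mul]
  apply Finset.sum_le_sum
  intro i _
  calc (B *ᵥ x) i ^ 2 = (∑ j, B i j * x j) ^ 2 := rfl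
    _ ≤ (∑ j, B i j ^ 2) * ∑ j, x j ^ 2 := Finset.sum_mul_sq_le_sq_mul_sq _ _ _

open scoped MatrixOrder in
lemma op2_le_trace {p : ℕ} {M : Matrix (Fin p) (Fin p) ℝ} (hM : M.PosSemidef) :
    op2 M ≤ M.trace := by
  obtain ⟨B, rfl⟩ : ∃ B : Matrix (Fin p) (Fin p) ℝ, M = Bᴴ * B :=
    CStarAlgebra.nonneg_iff_eq_star_mul_self.mp hM.nonneg
  have h1 : op2 (Bᴴ * B) = op2 B * op2 B := B.l2_opNorm_conjTranspose_mul_self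
  have h2 : (Bᴴ * B).trace = ∑ i, ∑ j, B i j ^ 2 := by
    rw [Finset.sum_comm]
    simp only [Matrix.trace, Matrix.diag, Matrix.mul_apply, conjTranspose_apply, star_trivial, sq]
  have h3 := op2_le_frob B
  have hfnn : (0:ℝ) ≤ ∑ i, ∑ j, B i j ^ 2 := by positivity
  have h4 : op2 B * op2 B ≤ ∑ i, ∑ j, B i j ^ 2 := by
    calc op2 B * op2 B ≤ Real.sqrt (∑ i, ∑ j, B i j ^ 2) * Real.sqrt (∑ i, ∑ j, B i j ^ 2) :=
          mul_le_mul h3 h3 (op2_nonneg B) (Real.sqrt_nonneg _)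
      _ = _ := Real.mul_self_sqrt hfnn
  rw [h1, h2]; exact h4

lemma dot_conj {p q : ℕ} (M : Matrix (Fin p) (Fin q) ℝ) (A : Matrix (Fin p) (Fin p) ℝ)
    (y : Fin q → ℝ) :
    (M *ᵥ y) ⬝ᵥ (A *ᵥ (M *ᵥ y)) = y ⬝ᵥ ((Mᵀ * A * M) *ᵥ y) := by
  rw [← mulVec_mulVec, ← mulVec_mulVec, dotProduct_comm y, mulVec_transpose,
    ← dotProduct_mulVec, dotProduct_comm]

lemma trace_eq_sum_col {p q : ℕ} (S : Matrix (Fin p) (Fin p) ℝ) (R : Matrix (Fin p) (Fin q) ℝ) :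
    (Rᵀ * S * R).trace
      = ∑ k : Fin q, (R *ᵥ Pi.single k 1) ⬝ᵥ (S *ᵥ (R *ᵥ Pi.single k 1)) := by
  simp only [Matrix.trace, Matrix.diag, Matrix.mul_apply, mul_one,
    dotProduct, transpose_apply, mulVec, Pi.single_apply, mul_ite, ite_mul, mul_zero, zero_mul,
    mul_one, Finset.sum_ite_eq', Finset.mem_univ, if_true]
  refine Finset.sum_congr rfl fun k _ => ?_
  simp only [Finset.sum_mul, Finset.mul_sum]
  rw [Finset.sum_comm]
  exact Finset.sum_congr rfl fun i _ => Finset.sum_congr rfl fun j _ => by ring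

/-- Covariance error bound: ‖R_fᵀΣR_f‖₂ ≤ tr(R_fᵀΣR_f) = Σₖ rₖᵀΣrₖ ≤ m‖Σ‖₂σ_{r+1}(Λ)². -/
theorem stmt16 {n m r : ℕ} (S : Matrix (Fin n) (Fin n) ℝ) (hS : S.PosDef)
    (Λ : Matrix (Fin n) (Fin m) ℝ)
    (Q : Matrix (Fin n) (Fin r) ℝ) (hQ : Qᵀ * Q = 1)
    (hTop : op2 ((1 - Q * Qᵀ) * Λ) = sval Λ r) :
    op2 (((1 - Q * (Qᵀ * S * Q)⁻¹ * Qᵀ * S) * Λ)ᵀ * S *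
          ((1 - Q * (Qᵀ * S * Q)⁻¹ * Qᵀ * S) * Λ))
        ≤ (((1 - Q * (Qᵀ * S * Q)⁻¹ * Qᵀ * S) * Λ)ᵀ * S *
          ((1 - Q * (Qᵀ * S * Q)⁻¹ * Qᵀ * S) * Λ)).trace
      ∧ (((1 - Q * (Qᵀ * S * Q)⁻¹ * Qᵀ * S) * Λ)ᵀ * S *
          ((1 - Q * (Qᵀ * S * Q)⁻¹ * Qᵀ * S) * Λ)).trace
        = ∑ k : Fin m,
            (((1 - Q * (Qᵀ * S * Q)⁻¹ * Qᵀ * S) * Λ) *ᵥ Pi.single k 1) ⬝ᵥ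
              (S *ᵥ (((1 - Q * (Qᵀ * S * Q)⁻¹ * Qᵀ * S) * Λ) *ᵥ Pi.single k 1))
      ∧ (((1 - Q * (Qᵀ * S * Q)⁻¹ * Qᵀ * S) * Λ)ᵀ * S *
          ((1 - Q * (Qᵀ * S * Q)⁻¹ * Qᵀ * S) * Λ)).trace
        ≤ (m : ℝ) * op2 S * sval Λ r ^ 2 := by
  classical
  have hST : Sᵀ = S := by
    have h := hS.isHermitian
    rwa [← conjTranspose_eq_transpose_of_trivial]
  set B := Qᵀ * S * Q with hBdef
  set N := 1 - Q * B⁻¹ * Qᵀ * S with hNdef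
  set R := N * Λ with hRdef
  have hB : B.PosDef := by
    refine posDef_iff_dotProduct_mulVec.mpr ⟨?_, ?_⟩
    · rw [hBdef, ← conjTranspose_eq_transpose_of_trivial Q]
      exact isHermitian_conjTranspose_mul_mul Q hS.isHermitian
    · intro x hx
      have hQx : Q *ᵥ x ≠ 0 := by
        intro h
        apply hx
        have h2 : (Qᵀ * Q) *ᵥ x = Qᵀ *ᵥ (Q *ᵥ x) := (mulVec_mulVec _ _ _).symm
        rw [hQ, h] at h2
        simpa using h2
      have h3 := hS.dotProduct_mulVec_pos hQx
      have h4 : (Q *ᵥ x) ⬝ᵥ (S *ᵥ (Q *ᵥ x)) = x ⬝ᵥ ((Qᵀ * S * Q) *ᵥ x) := dot_conj Q S x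
      simp only [star_trivial] at h3 ⊢
      rw [hBdef, ← h4]
      simpa using h3
  have hdet : IsUnit B.det := hB.isUnit.map detMonoidHom
  have hBB : B * B⁻¹ = 1 := mul_nonsing_inv B hdet
  have hB'B : B⁻¹ * B = 1 := nonsing_inv_mul B hdet
  have hBsymm : Bᵀ = B := by
    rw [hBdef, transpose_mul, transpose_mul, transpose_transpose, hST, Matrix.mul_assoc]
  have hBT : B⁻¹ᵀ = B⁻¹ := by rw [transpose_nonsing_inv, hBsymm]
  have hkeyL : ∀ {k : ℕ} (X : Matrix (Fin r) (Fin k) ℝ), Qᵀ * (S * (Q * (B⁻¹ * X))) = X := by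
    intro k X
    calc Qᵀ * (S * (Q * (B⁻¹ * X))) = (B * B⁻¹) * X := by
          rw [hBdef]; simp only [Matrix.mul_assoc]
      _ = X := by rw [hBB, Matrix.one_mul]
  have hkeyR : ∀ {k : ℕ} (X : Matrix (Fin r) (Fin k) ℝ), B⁻¹ * (Qᵀ * (S * (Q * X))) = X := by
    intro k X
    calc B⁻¹ * (Qᵀ * (S * (Q * X))) = (B⁻¹ * B) * X := by
          rw [hBdef]; simp only [Matrix.mul_assoc]
      _ = X := by rw [hB'B, Matrix.one_mul]
  have hannih : ∀ {k : ℕ} (X : Matrix (Fin r) (Fin k) ℝ), N * (Q * X) = 0 := by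
    intro k X
    rw [hNdef, Matrix.sub_mul, Matrix.one_mul]
    have h : Q * B⁻¹ * Qᵀ * S * (Q * X) = Q * (B⁻¹ * (Qᵀ * (S * (Q * X)))) := by
      simp only [Matrix.mul_assoc]
    rw [h, hkeyR, sub_self]
  have hNfact : N * ((1 - Q * Qᵀ) * Λ) = R := by
    have h1 : (1 - Q * Qᵀ) * Λ = Λ - Q * (Qᵀ * Λ) := by
      rw [Matrix.sub_mul, Matrix.one_mul, Matrix.mul_assoc]
    rw [h1, Matrix.mul_sub, hannih, sub_zero, hRdef]
  have hNSN : Nᵀ * S * N = S - S * (Q * (B⁻¹ * (Qᵀ * S))) := by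
    have hNT : Nᵀ = 1 - S * (Q * (B⁻¹ * Qᵀ)) := by
      rw [hNdef, transpose_sub, transpose_one, transpose_mul, transpose_mul, transpose_mul,
        hST, hBT, transpose_transpose]
    rw [hNT, hNdef]
    simp only [Matrix.sub_mul, Matrix.mul_sub, Matrix.one_mul, Matrix.mul_one,
      Matrix.mul_assoc]
    rw [hkeyL (Qᵀ * S)]
    abel
  have hPSD : (Rᵀ * S * R).PosSemidef := by
    have h := hS.posSemidef.conjTranspose_mul_mul_same R
    rwa [conjTranspose_eq_transpose_of_trivial] at h
  have htrace := trace_eq_sum_col S R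
  have hsval : 0 ≤ sval Λ r := hTop ▸ op2_nonneg _
  have hcol : ∀ k : Fin m, (R *ᵥ Pi.single k 1) ⬝ᵥ (S *ᵥ (R *ᵥ Pi.single k 1))
      ≤ op2 S * sval Λ r ^ 2 := by
    intro k
    have h1 : R *ᵥ Pi.single k 1 = N *ᵥ (((1 - Q * Qᵀ) * Λ) *ᵥ Pi.single k 1) := by
      rw [mulVec_mulVec, hNfact]
    set y : Fin n → ℝ := ((1 - Q * Qᵀ) * Λ) *ᵥ Pi.single k 1 with hy
    rw [h1, dot_conj, hNSN, sub_mulVec, dotProduct_sub]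
    have h2 : 0 ≤ y ⬝ᵥ ((S * (Q * (B⁻¹ * (Qᵀ * S)))) *ᵥ y) := by
      have hform : S * (Q * (B⁻¹ * (Qᵀ * S))) = (Qᵀ * S)ᵀ * B⁻¹ * (Qᵀ * S) := by
        rw [transpose_mul, hST, transpose_transpose]
        simp only [Matrix.mul_assoc]
      rw [hform, ← dot_conj]
      have h3 := hB.inv.posSemidef.dotProduct_mulVec_nonneg ((Qᵀ * S) *ᵥ y)
      simpa using h3
    have h4 : y ⬝ᵥ (S *ᵥ y) ≤ op2 S * sval Λ r ^ 2 := by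
      have h5 := quad_le S y
      have h6 : y ⬝ᵥ y ≤ sval Λ r ^ 2 := by
        have h7 := enorm_mulVec_le ((1 - Q * Qᵀ) * Λ) (Pi.single k 1)
        have h8 : ‖((WithLp.equiv 2 _).symm (Pi.single k 1) : EuclideanSpace ℝ (Fin m))‖
            = 1 := by
          have he : ((WithLp.equiv 2 _).symm (Pi.single k 1) : EuclideanSpace ℝ (Fin m))
              = EuclideanSpace.single k (1:ℝ) := rfl
          rw [he, EuclideanSpace.norm_single]; norm_num
        rw [h8, mul_one, hTop] at h7
        have h9 : y ⬝ᵥ y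
            = ‖((WithLp.equiv 2 _).symm y : EuclideanSpace ℝ (Fin n))‖ ^ 2 := by
          rw [dot_as_inner, real_inner_self_eq_norm_sq]
        rw [h9]
        exact pow_le_pow_left₀ (norm_nonneg _) h7 2
      nlinarith [op2_nonneg S]
    linarith
  refine ⟨op2_le_trace hPSD, htrace, ?_⟩
  rw [htrace]
  calc (∑ k : Fin m, (R *ᵥ Pi.single k 1) ⬝ᵥ (S *ᵥ (R *ᵥ Pi.single k 1)))
      ≤ ∑ _k : Fin m, op2 S * sval Λ r ^ 2 := Finset.sum_le_sum fun k _ => hcol k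
    _ = (m : ℝ) * op2 S * sval Λ r ^ 2 := by
        rw [Finset.sum_const, Finset.card_univ]
        simp [mul_assoc]
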